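/- For every prime p and every positive integer s, the sequence a_n = ∑_{k=0}^{n} C(n, k)^s satisfies a_{pn+j} ≡ a_n · a_j (mod p) for all nonnegative integers n and all j with 0 ≤ j ≤ p − 1. -/

import Mathlib

theorem power_sums_lucas_property (p : ℕ) (hp : p.Prime) (s : ℕ) (hs : 0 < s)
    (n j : ℕ) (hj : j ≤ p - 1) :
    (∑ k ∈ Finset.range (p * n + j + 1), (Nat.choose (p * n + j) k) ^ s) ≡
      (∑ k ∈ Finset.range (n + 1), (Nat.choose n k) ^ s) *
      (∑ k ∈ Finset.range (j + 1), (Nat.choose j k) ^ s) [MOD p] := by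
  haveI : Fact p.Prime := ⟨hp⟩
  have hjp : j < p := lt_of_le_of_lt hj (Nat.sub_lt hp.pos one_pos)
  rw [← ZMod.natCast_eq_natCast_iff]
  push_cast
  -- Lucas for each term
  have lucas : ∀ k : ℕ, ((p * n + j).choose k : ZMod p) =
      (Nat.choose n (k / p) : ZMod p) * (Nat.choose j (k % p) : ZMod p) := by
    intro k
    have h := (Choose.choose_modEq_choose_mod_mul_choose_div_nat (n := p * n + j)
      (k := k) (p := p))
    have hmod : (p * n + j) % p = j := by
      rw [Nat.mul_add_mod, Nat.mod_eq_of_lt hjp]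
    have hdiv : (p * n + j) / p = n := by
      rw [Nat.mul_add_div hp.pos, Nat.div_eq_of_lt hjp, add_zero]
    rw [hmod, hdiv] at h
    have := (ZMod.natCast_eq_natCast_iff _ _ _).mpr h
    push_cast at this
    rw [this, mul_comm]
  -- extend the sum to range (p * (n+1))
  have hext : (∑ k ∈ Finset.range (p * n + j + 1), ((p * n + j).choose k : ZMod p) ^ s) =
      ∑ k ∈ Finset.range (p * (n + 1)), ((p * n + j).choose k : ZMod p) ^ s := by
    apply Finset.sum_subset
    · apply Finset.range_subset_range.mpr
      have : j + 1 ≤ p := hjp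
      nlinarith [Nat.mul_le_mul_left p (Nat.le_refl (n+1))]
    · intro x _ hx
      rw [Finset.mem_range, not_lt] at hx
      rw [Nat.choose_eq_zero_of_lt (by omega)]
      simp [pow_eq_zero_iff, hs.ne']
  rw [hext]
  -- reindex the sum
  have hre : (∑ k ∈ Finset.range (p * (n + 1)), ((p * n + j).choose k : ZMod p) ^ s) =
      ∑ q ∈ Finset.range (n + 1), ∑ r ∈ Finset.range p,
        (Nat.choose n q : ZMod p) ^ s * (Nat.choose j r : ZMod p) ^ s := by
    rw [← Finset.sum_product']
    apply Finset.sum_nbij' (fun k => (k / p, k % p)) (fun qr => p * qr.1 + qr.2)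
    · intro k hk
      simp only [Finset.mem_range] at hk
      simp only [Finset.mem_product, Finset.mem_range]
      constructor
      · exact (Nat.div_lt_iff_lt_mul hp.pos).mpr (by rwa [mul_comm] at hk)
      · exact Nat.mod_lt _ hp.pos
    · intro qr hqr
      simp only [Finset.mem_product, Finset.mem_range] at hqr
      simp only [Finset.mem_range]
      have := hqr.1; have := hqr.2
      nlinarith
    · intro k _
      exact Nat.div_add_mod k p
    · intro qr hqr
      simp only [Finset.mem_product, Finset.mem_range] at hqr
      simp [Nat.mul_add_div hp.pos, Nat.div_eq_of_lt hqr.2, Nat.mul_add_mod,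
        Nat.mod_eq_of_lt hqr.2]
    · intro k _
      rw [lucas k, mul_pow]
  rw [hre]
  -- split the double sum and shrink inner sum
  have hinner : (∑ r ∈ Finset.range p, (Nat.choose j r : ZMod p) ^ s) =
      ∑ r ∈ Finset.range (j + 1), (Nat.choose j r : ZMod p) ^ s := by
    symm
    apply Finset.sum_subset (Finset.range_subset_range.mpr hjp)
    intro x _ hx
    rw [Finset.mem_range, not_lt] at hx
    rw [Nat.choose_eq_zero_of_lt (by omega)]
    simp [hs.ne']
  calc (∑ q ∈ Finset.range (n + 1), ∑ r ∈ Finset.range p,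
        (Nat.choose n q : ZMod p) ^ s * (Nat.choose j r : ZMod p) ^ s)
      = ∑ q ∈ Finset.range (n + 1), (Nat.choose n q : ZMod p) ^ s *
          ∑ r ∈ Finset.range p, (Nat.choose j r : ZMod p) ^ s := by
        simp [Finset.mul_sum]
    _ = _ := by rw [hinner, ← Finset.sum_mul]
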